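/- Let q₀ > 0, α ∈ ℝ, and θ₊ ∈ (0, π) with θ₊ ≠ π/2. Define η(x,t) := q₀ x cos θ₊ - (α t / 2) cot θ₊, and define q, s : ℝ × ℝ → ℂ by q(x,t) := q₀ e^{i α t} [ i sin θ₊ + cos θ₊ · tanh(η(x,t)) ] and s(x,t) := -(1/2) q₀ α cos θ₊ cot θ₊ · sech²(η(x,t)). Then for all (x,t) ∈ ℝ²: (i) ∂_x ∂_t q(x,t) + 2 s(x,t) q(x,t) = 0; (ii) ∂_x s(x,t) = ∂_t ( q(x,t) q(-x,-t) ); and (iii) s(-x,-t) = s(x,t). That is, q is an exact (dark) one-soliton solution of the nonlocal reverse space-time Sine-Gordon equation. -/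

import Mathlib

lemma tanh_hasDerivAt' (u : ℝ) : HasDerivAt Real.tanh ((1 / Real.cosh u) ^ 2) u := by
  have h : HasDerivAt (fun v => Real.sinh v / Real.cosh v)
      ((Real.cosh u * Real.cosh u - Real.sinh u * Real.sinh u) / Real.cosh u ^ 2) u :=
    (Real.hasDerivAt_sinh u).div (Real.hasDerivAt_cosh u) (Real.cosh_pos u).ne'
  have he : (fun v => Real.sinh v / Real.cosh v) = Real.tanh :=
    funext fun v => (Real.tanh_eq_sinh_div_cosh v).symm
  rw [he] at h
  convert h using 1
  rw [show Real.cosh u * Real.cosh u - Real.sinh u * Real.sinh u = 1 from by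
    rw [← sq, ← sq]; exact Real.cosh_sq_sub_sinh_sq u, div_pow, one_pow]

lemma hasDerivAt_tanh_comp' {f : ℝ → ℝ} {f' x : ℝ} (hf : HasDerivAt f f' x) :
    HasDerivAt (fun y => Real.tanh (f y)) ((1 / Real.cosh (f x)) ^ 2 * f') x := by
  exact (tanh_hasDerivAt' (f x)).comp x hf

lemma sech_sq_hasDerivAt' (u : ℝ) :
    HasDerivAt (fun v => (1 / Real.cosh v) ^ 2)
      (-2 * (1 / Real.cosh u) ^ 2 * Real.tanh u) u := by
  have h := ((Real.hasDerivAt_cosh u).inv (Real.cosh_pos u).ne').pow 2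
  simp only [one_div]
  refine h.congr_deriv ?_
  have hc := (Real.cosh_pos u).ne'
  rw [Real.tanh_eq_sinh_div_cosh]
  push_cast
  field_simp
  rw [Pi.inv_apply]; field_simp

lemma hasDerivAt_sech_sq_comp' {f : ℝ → ℝ} {f' x : ℝ} (hf : HasDerivAt f f' x) :
    HasDerivAt (fun y => (1 / Real.cosh (f y)) ^ 2)
      (-2 * (1 / Real.cosh (f x)) ^ 2 * Real.tanh (f x) * f') x := by
  exact (sech_sq_hasDerivAt' (f x)).comp x hf

/-- The dark one-soliton `q(x,t) = q₀ e^{iαt} (i sin θ₊ + cos θ₊ tanh η)`,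
`η = q₀ x cos θ₊ - (αt/2) cot θ₊`, together with
`s = -(1/2) q₀ α cos θ₊ cot θ₊ sech² η`, is an exact solution of the nonlocal
reverse space-time Sine-Gordon equation `q_{xt} + 2sq = 0`,
`s_x = ∂_t(q(x,t)q(-x,-t))`, with `s(-x,-t) = s(x,t)`. -/
theorem rst_sineGordon_dark_one_soliton (q₀ α θp : ℝ) (hq₀ : 0 < q₀)
    (hθ : θp ∈ Set.Ioo 0 Real.pi) (hθ' : θp ≠ Real.pi / 2)
    (η : ℝ → ℝ → ℝ)
    (hη : ∀ x t : ℝ, η x t = q₀ * x * Real.cos θp - α * t / 2 * Real.cot θp)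
    (q s : ℝ → ℝ → ℂ)
    (hq : ∀ x t : ℝ, q x t =
      (q₀ : ℂ) * Complex.exp (Complex.I * (α : ℂ) * (t : ℂ)) *
        (Complex.I * (Real.sin θp : ℂ) + (Real.cos θp : ℂ) * (Real.tanh (η x t) : ℂ)))
    (hs : ∀ x t : ℝ, s x t =
      ((-(1 / 2) * q₀ * α * Real.cos θp * Real.cot θp * (1 / Real.cosh (η x t)) ^ 2 : ℝ) : ℂ)) :
    (∀ x t : ℝ,
      deriv (fun y : ℝ => deriv (fun τ : ℝ => q y τ) t) x + 2 * s x t * q x t = 0) ∧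
    (∀ x t : ℝ,
      deriv (fun y : ℝ => s y t) x = deriv (fun τ : ℝ => q x τ * q (-x) (-τ)) t) ∧
    (∀ x t : ℝ, s (-x) (-t) = s x t) := by
  obtain ⟨hθ0, hθπ⟩ := hθ
  have hsin : Real.sin θp ≠ 0 := (Real.sin_pos_of_pos_of_lt_pi hθ0 hθπ).ne'
  have hcot : Real.cot θp * Real.sin θp = Real.cos θp := by
    rw [Real.cot_eq_cos_div_sin]; field_simp
  have hcosC : (Real.cos θp : ℂ) = (Real.cot θp : ℂ) * (Real.sin θp : ℂ) := by
    exact_mod_cast hcot.symm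
  -- derivative of η in t
  have hη_t : ∀ x t : ℝ, HasDerivAt (fun τ => η x τ) (-(α / 2 * Real.cot θp)) t := by
    intro x t
    have hfun : (fun τ => η x τ) =
        fun τ => q₀ * x * Real.cos θp - α / 2 * Real.cot θp * τ :=
      funext fun τ => by rw [hη]; ring
    rw [hfun]
    simpa using ((hasDerivAt_id t).const_mul (α / 2 * Real.cot θp)).const_sub
      (q₀ * x * Real.cos θp)
  -- derivative of η in x
  have hη_x : ∀ x t : ℝ, HasDerivAt (fun y => η y t) (q₀ * Real.cos θp) x := by
    intro x t
    have hfun : (fun y => η y t) =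
        fun y => q₀ * Real.cos θp * y - α * t / 2 * Real.cot θp :=
      funext fun y => by rw [hη]; ring
    rw [hfun]
    simpa using ((hasDerivAt_id x).const_mul (q₀ * Real.cos θp)).sub_const
      (α * t / 2 * Real.cot θp)
  -- derivative of q in t
  have hqτ : ∀ x t : ℝ, HasDerivAt (fun τ : ℝ => q x τ)
      ((q₀ : ℂ) * (Complex.exp (Complex.I * (α : ℂ) * (t : ℂ)) * (Complex.I * (α : ℂ)) *
          (Complex.I * (Real.sin θp : ℂ) + (Real.cos θp : ℂ) * (Real.tanh (η x t) : ℂ)) +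
        Complex.exp (Complex.I * (α : ℂ) * (t : ℂ)) *
          ((Real.cos θp : ℂ) *
            (((1 / Real.cosh (η x t)) ^ 2 * (-(α / 2 * Real.cot θp)) : ℝ) : ℂ)))) t := by
    intro x t
    have hfun : (fun τ : ℝ => q x τ) = fun τ : ℝ =>
        (q₀ : ℂ) * (Complex.exp (Complex.I * (α : ℂ) * (τ : ℂ)) *
          (Complex.I * (Real.sin θp : ℂ) + (Real.cos θp : ℂ) * (Real.tanh (η x τ) : ℂ))) :=
      funext fun τ => by rw [hq]; ring
    rw [hfun]
    have h0 : HasDerivAt (fun τ : ℝ => Complex.I * (α : ℂ) * (τ : ℂ))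
        (Complex.I * (α : ℂ)) t := by
      simpa using ((hasDerivAt_id t).ofReal_comp).const_mul (Complex.I * (α : ℂ))
    have hE : HasDerivAt (fun τ : ℝ => Complex.exp (Complex.I * (α : ℂ) * (τ : ℂ)))
        (Complex.exp (Complex.I * (α : ℂ) * (t : ℂ)) * (Complex.I * (α : ℂ))) t := h0.cexp
    have hT : HasDerivAt (fun τ : ℝ => ((Real.tanh (η x τ) : ℝ) : ℂ))
        ((((1 / Real.cosh (η x t)) ^ 2 * (-(α / 2 * Real.cot θp)) : ℝ)) : ℂ) t :=
      (hasDerivAt_tanh_comp' (hη_t x t)).ofReal_comp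
    exact (hE.mul ((hT.const_mul ((Real.cos θp : ℂ))).const_add
      (Complex.I * (Real.sin θp : ℂ)))).const_mul (q₀ : ℂ)
  refine ⟨?_, ?_, ?_⟩
  · -- q_{xt} + 2 s q = 0
    intro x t
    have h1 : (fun y : ℝ => deriv (fun τ : ℝ => q y τ) t) = fun y : ℝ =>
        (q₀ : ℂ) * (Complex.exp (Complex.I * (α : ℂ) * (t : ℂ)) * (Complex.I * (α : ℂ)) *
          (Complex.I * (Real.sin θp : ℂ) + (Real.cos θp : ℂ) * (Real.tanh (η y t) : ℂ)) +
        Complex.exp (Complex.I * (α : ℂ) * (t : ℂ)) *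
          ((Real.cos θp : ℂ) *
            (((1 / Real.cosh (η y t)) ^ 2 * (-(α / 2 * Real.cot θp)) : ℝ) : ℂ))) :=
      funext fun y => (hqτ y t).deriv
    have hTy : HasDerivAt (fun y : ℝ => ((Real.tanh (η y t) : ℝ) : ℂ))
        ((((1 / Real.cosh (η x t)) ^ 2 * (q₀ * Real.cos θp) : ℝ)) : ℂ) x :=
      (hasDerivAt_tanh_comp' (hη_x x t)).ofReal_comp
    have hSy : HasDerivAt
        (fun y : ℝ => (((1 / Real.cosh (η y t)) ^ 2 * (-(α / 2 * Real.cot θp)) : ℝ) : ℂ))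
        (((-2 * (1 / Real.cosh (η x t)) ^ 2 * Real.tanh (η x t) * (q₀ * Real.cos θp) *
          (-(α / 2 * Real.cot θp)) : ℝ)) : ℂ) x :=
      ((hasDerivAt_sech_sq_comp' (hη_x x t)).mul_const _).ofReal_comp
    have hbig : HasDerivAt (fun y : ℝ =>
        (q₀ : ℂ) * (Complex.exp (Complex.I * (α : ℂ) * (t : ℂ)) * (Complex.I * (α : ℂ)) *
          (Complex.I * (Real.sin θp : ℂ) + (Real.cos θp : ℂ) * (Real.tanh (η y t) : ℂ)) +
        Complex.exp (Complex.I * (α : ℂ) * (t : ℂ)) *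
          ((Real.cos θp : ℂ) *
            (((1 / Real.cosh (η y t)) ^ 2 * (-(α / 2 * Real.cot θp)) : ℝ) : ℂ))))
        ((q₀ : ℂ) * (Complex.exp (Complex.I * (α : ℂ) * (t : ℂ)) * (Complex.I * (α : ℂ)) *
          ((Real.cos θp : ℂ) * (((1 / Real.cosh (η x t)) ^ 2 * (q₀ * Real.cos θp) : ℝ) : ℂ)) +
        Complex.exp (Complex.I * (α : ℂ) * (t : ℂ)) *
          ((Real.cos θp : ℂ) *
            (((-2 * (1 / Real.cosh (η x t)) ^ 2 * Real.tanh (η x t) * (q₀ * Real.cos θp) *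
              (-(α / 2 * Real.cot θp)) : ℝ)) : ℂ)))) x := by
      exact ((((hTy.const_mul ((Real.cos θp : ℂ))).const_add
          (Complex.I * (Real.sin θp : ℂ))).const_mul
          (Complex.exp (Complex.I * (α : ℂ) * (t : ℂ)) * (Complex.I * (α : ℂ)))).add
        ((hSy.const_mul ((Real.cos θp : ℂ))).const_mul
          (Complex.exp (Complex.I * (α : ℂ) * (t : ℂ))))).const_mul (q₀ : ℂ)
    have h2 : deriv (fun y : ℝ => deriv (fun τ : ℝ => q y τ) t) x =
        ((q₀ : ℂ) * (Complex.exp (Complex.I * (α : ℂ) * (t : ℂ)) * (Complex.I * (α : ℂ)) *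
          ((Real.cos θp : ℂ) * (((1 / Real.cosh (η x t)) ^ 2 * (q₀ * Real.cos θp) : ℝ) : ℂ)) +
        Complex.exp (Complex.I * (α : ℂ) * (t : ℂ)) *
          ((Real.cos θp : ℂ) *
            (((-2 * (1 / Real.cosh (η x t)) ^ 2 * Real.tanh (η x t) * (q₀ * Real.cos θp) *
              (-(α / 2 * Real.cot θp)) : ℝ)) : ℂ)))) := by
      rw [h1]; exact hbig.deriv
    rw [h2, hs x t, hq x t]
    simp only [Complex.ofReal_mul, Complex.ofReal_neg, Complex.ofReal_pow,
      Complex.ofReal_div, Complex.ofReal_one, Complex.ofReal_ofNat]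
    rw [hcosC]
    ring
  · -- s_x = ∂_t (q(x,t) q(-x,-t))
    intro x t
    have hsx : (fun y : ℝ => s y t) = fun y : ℝ =>
        ((-(1 / 2) * q₀ * α * Real.cos θp * Real.cot θp * (1 / Real.cosh (η y t)) ^ 2 : ℝ) : ℂ) :=
      funext fun y => hs y t
    have e2 : deriv (fun y : ℝ => s y t) x =
        (((-(1 / 2) * q₀ * α * Real.cos θp * Real.cot θp *
          (-2 * (1 / Real.cosh (η x t)) ^ 2 * Real.tanh (η x t) * (q₀ * Real.cos θp)) : ℝ)) : ℂ) := by
      rw [hsx]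
      exact (((hasDerivAt_sech_sq_comp' (hη_x x t)).const_mul
        (-(1 / 2) * q₀ * α * Real.cos θp * Real.cot θp)).ofReal_comp).deriv
    have hfun2 : (fun τ : ℝ => q x τ * q (-x) (-τ)) = fun τ : ℝ =>
        ((q₀ : ℂ) ^ 2) * ((Complex.I * (Real.sin θp : ℂ) +
            (Real.cos θp : ℂ) * (Real.tanh (η x τ) : ℂ)) *
          (Complex.I * (Real.sin θp : ℂ) -
            (Real.cos θp : ℂ) * (Real.tanh (η x τ) : ℂ))) := by
      funext τ
      rw [hq x τ, hq (-x) (-τ)]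
      have hne : η (-x) (-τ) = -(η x τ) := by rw [hη, hη]; ring
      rw [hne, Real.tanh_neg]
      have hE : Complex.exp (Complex.I * (α : ℂ) * (τ : ℂ)) *
          Complex.exp (Complex.I * (α : ℂ) * (-(τ : ℂ))) = 1 := by
        rw [← Complex.exp_add,
          show Complex.I * (α : ℂ) * (τ : ℂ) + Complex.I * (α : ℂ) * (-(τ : ℂ)) = 0 from by ring,
          Complex.exp_zero]
      simp only [Complex.ofReal_mul, Complex.ofReal_neg, Complex.ofReal_pow,
        Complex.ofReal_div, Complex.ofReal_one, Complex.ofReal_ofNat]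
      linear_combination ((q₀ : ℂ) ^ 2 * (Complex.I * (Real.sin θp : ℂ) +
          (Real.cos θp : ℂ) * (Real.tanh (η x τ) : ℂ)) *
        (Complex.I * (Real.sin θp : ℂ) -
          (Real.cos θp : ℂ) * (Real.tanh (η x τ) : ℂ))) * hE
    have hT : HasDerivAt (fun τ : ℝ => ((Real.tanh (η x τ) : ℝ) : ℂ))
        ((((1 / Real.cosh (η x t)) ^ 2 * (-(α / 2 * Real.cot θp)) : ℝ)) : ℂ) t :=
      (hasDerivAt_tanh_comp' (hη_t x t)).ofReal_comp
    have e3 : deriv (fun τ : ℝ => q x τ * q (-x) (-τ)) t =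
        ((q₀ : ℂ) ^ 2) * (((Real.cos θp : ℂ) *
            (((1 / Real.cosh (η x t)) ^ 2 * (-(α / 2 * Real.cot θp)) : ℝ) : ℂ)) *
          (Complex.I * (Real.sin θp : ℂ) -
            (Real.cos θp : ℂ) * (Real.tanh (η x t) : ℂ)) +
          (Complex.I * (Real.sin θp : ℂ) +
            (Real.cos θp : ℂ) * (Real.tanh (η x t) : ℂ)) *
          -((Real.cos θp : ℂ) *
            (((1 / Real.cosh (η x t)) ^ 2 * (-(α / 2 * Real.cot θp)) : ℝ) : ℂ))) := by
      rw [hfun2]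
      exact (((hT.const_mul ((Real.cos θp : ℂ))).const_add
          (Complex.I * (Real.sin θp : ℂ))).mul
        ((hT.const_mul ((Real.cos θp : ℂ))).const_sub
          (Complex.I * (Real.sin θp : ℂ)))).const_mul ((q₀ : ℂ) ^ 2) |>.deriv
    rw [e2, e3]
    simp only [Complex.ofReal_mul, Complex.ofReal_neg, Complex.ofReal_pow,
      Complex.ofReal_div, Complex.ofReal_one, Complex.ofReal_ofNat]
    ring
  · -- symmetry of s
    intro x t
    rw [hs, hs]
    have hne : η (-x) (-t) = -(η x t) := by rw [hη, hη]; ring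
    rw [hne, Real.cosh_neg]
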